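/- arXiv:math/0608067 — 6 statements merged into one kernel-verified Lean document; each statement's English description precedes it below -/
import Mathlib

section
/- Let γ: R → S^3 be a curve satisfying the geodesic equation D_{γ'}γ' + 2λ J(γ') = 0 with γ(0)=p a unit quaternion, γ'(0)=v a unit horizontal vector at p, where λ ∈ R. Then γ is given explicitly by γ(s) = cos(λs)cos(√(1+λ²)s)·p + [sin(λs)sin(√(1+λ²)s)/√(1+λ²)]·(λp − i·v) − sin(λs)cos(√(1+λ²)s)·(i·p) + [cos(λs)sin(√(1+λ²)s)/√(1+λ²)]·(λ(i·p) + v). -/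
open Real
open scoped RealInnerProductSpace

def qi : Quaternion ℝ := ⟨0, 1, 0, 0⟩

lemma qi_mul_qi : qi * qi = -1 := by
  ext <;> simp only [Quaternion.re_mul, Quaternion.imI_mul, Quaternion.imJ_mul, Quaternion.imK_mul] <;> simp [qi, Quaternion.re_one, Quaternion.imI_one, Quaternion.imJ_one, Quaternion.imK_one]

/-- The explicit solution curve. -/
noncomputable def sol (lam ω : ℝ) (p v : Quaternion ℝ) (s : ℝ) : Quaternion ℝ :=
  (Real.cos (lam*s) * Real.cos (ω*s) + lam * ω⁻¹ * (Real.sin (lam*s) * Real.sin (ω*s))) • p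
  + (lam * ω⁻¹ * (Real.cos (lam*s) * Real.sin (ω*s)) - Real.sin (lam*s) * Real.cos (ω*s)) • (qi * p)
  + (ω⁻¹ * (Real.cos (lam*s) * Real.sin (ω*s))) • v
  + (-(ω⁻¹ * (Real.sin (lam*s) * Real.sin (ω*s)))) • (qi * v)

/-- Its first derivative. -/
noncomputable def sol1 (lam ω : ℝ) (p v : Quaternion ℝ) (s : ℝ) : Quaternion ℝ :=
  (-(ω⁻¹ * (Real.cos (lam*s) * Real.sin (ω*s)))) • p
  + (ω⁻¹ * (Real.sin (lam*s) * Real.sin (ω*s))) • (qi * p)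
  + (Real.cos (lam*s) * Real.cos (ω*s) - lam * ω⁻¹ * (Real.sin (lam*s) * Real.sin (ω*s))) • v
  + (-(lam * ω⁻¹ * (Real.cos (lam*s) * Real.sin (ω*s))) - Real.sin (lam*s) * Real.cos (ω*s)) • (qi * v)

/-- Its second derivative. -/
noncomputable def sol2 (lam ω : ℝ) (p v : Quaternion ℝ) (s : ℝ) : Quaternion ℝ :=
  (lam * ω⁻¹ * (Real.sin (lam*s) * Real.sin (ω*s)) - Real.cos (lam*s) * Real.cos (ω*s)) • p
  + (lam * ω⁻¹ * (Real.cos (lam*s) * Real.sin (ω*s)) + Real.sin (lam*s) * Real.cos (ω*s)) • (qi * p)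
  + (-((lam^2 * ω⁻¹ + ω) * (Real.cos (lam*s) * Real.sin (ω*s))) - 2*lam*(Real.sin (lam*s) * Real.cos (ω*s))) • v
  + ((lam^2 * ω⁻¹ + ω) * (Real.sin (lam*s) * Real.sin (ω*s)) - 2*lam*(Real.cos (lam*s) * Real.cos (ω*s))) • (qi * v)

lemma hasDerivAt_lin (a s : ℝ) : HasDerivAt (fun s : ℝ => a * s) a s := by
  simpa using (hasDerivAt_id s).const_mul a

lemma hasDerivAt_sol (lam ω : ℝ) (hw : ω * ω⁻¹ = 1) (hω2 : ω^2 = 1 + lam^2)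
    (p v : Quaternion ℝ) (s : ℝ) :
    HasDerivAt (sol lam ω p v) (sol1 lam ω p v s) s := by
  have hcl := (hasDerivAt_lin lam s).cos
  have hsl := (hasDerivAt_lin lam s).sin
  have hco := (hasDerivAt_lin ω s).cos
  have hso := (hasDerivAt_lin ω s).sin
  have h1 : HasDerivAt (fun s => Real.cos (lam*s) * Real.cos (ω*s)
      + lam * ω⁻¹ * (Real.sin (lam*s) * Real.sin (ω*s)))
      (-(ω⁻¹ * (Real.cos (lam*s) * Real.sin (ω*s)))) s := by
    have := (hcl.mul hco).add ((hsl.mul hso).const_mul (lam * ω⁻¹))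
    refine this.congr_deriv (Eq.symm ?_)
    linear_combination (-(lam * (Real.sin (lam*s) * Real.cos (ω*s)))
      - ω * (Real.cos (lam*s) * Real.sin (ω*s))) * hw
      + (ω⁻¹ * (Real.cos (lam*s) * Real.sin (ω*s))) * hω2
  have h2 : HasDerivAt (fun s => lam * ω⁻¹ * (Real.cos (lam*s) * Real.sin (ω*s))
      - Real.sin (lam*s) * Real.cos (ω*s))
      (ω⁻¹ * (Real.sin (lam*s) * Real.sin (ω*s))) s := by
    have := ((hcl.mul hso).const_mul (lam * ω⁻¹)).sub (hsl.mul hco)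
    refine this.congr_deriv (Eq.symm ?_)
    linear_combination (-(lam * (Real.cos (lam*s) * Real.cos (ω*s)))
      + ω * (Real.sin (lam*s) * Real.sin (ω*s))) * hw
      - (ω⁻¹ * (Real.sin (lam*s) * Real.sin (ω*s))) * hω2
  have h3 : HasDerivAt (fun s => ω⁻¹ * (Real.cos (lam*s) * Real.sin (ω*s)))
      (Real.cos (lam*s) * Real.cos (ω*s) - lam * ω⁻¹ * (Real.sin (lam*s) * Real.sin (ω*s))) s := by
    have := (hcl.mul hso).const_mul ω⁻¹
    refine this.congr_deriv (Eq.symm ?_)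
    linear_combination (-(Real.cos (lam*s) * Real.cos (ω*s))) * hw
  have h4 : HasDerivAt (fun s => -(ω⁻¹ * (Real.sin (lam*s) * Real.sin (ω*s))))
      (-(lam * ω⁻¹ * (Real.cos (lam*s) * Real.sin (ω*s))) - Real.sin (lam*s) * Real.cos (ω*s)) s := by
    have := ((hsl.mul hso).const_mul ω⁻¹).neg
    refine this.congr_deriv (Eq.symm ?_)
    linear_combination (Real.sin (lam*s) * Real.cos (ω*s)) * hw
  exact (((h1.smul_const p).add (h2.smul_const (qi*p))).add (h3.smul_const v)).add
    (h4.smul_const (qi*v))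

lemma hasDerivAt_sol1 (lam ω : ℝ) (hw : ω * ω⁻¹ = 1)
    (p v : Quaternion ℝ) (s : ℝ) :
    HasDerivAt (sol1 lam ω p v) (sol2 lam ω p v s) s := by
  have hcl := (hasDerivAt_lin lam s).cos
  have hsl := (hasDerivAt_lin lam s).sin
  have hco := (hasDerivAt_lin ω s).cos
  have hso := (hasDerivAt_lin ω s).sin
  have h1 : HasDerivAt (fun s => -(ω⁻¹ * (Real.cos (lam*s) * Real.sin (ω*s))))
      (lam * ω⁻¹ * (Real.sin (lam*s) * Real.sin (ω*s)) - Real.cos (lam*s) * Real.cos (ω*s)) s := by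
    have := ((hcl.mul hso).const_mul ω⁻¹).neg
    refine this.congr_deriv (Eq.symm ?_)
    linear_combination (Real.cos (lam*s) * Real.cos (ω*s)) * hw
  have h2 : HasDerivAt (fun s => ω⁻¹ * (Real.sin (lam*s) * Real.sin (ω*s)))
      (lam * ω⁻¹ * (Real.cos (lam*s) * Real.sin (ω*s)) + Real.sin (lam*s) * Real.cos (ω*s)) s := by
    have := (hsl.mul hso).const_mul ω⁻¹
    refine this.congr_deriv (Eq.symm ?_)
    linear_combination (-(Real.sin (lam*s) * Real.cos (ω*s))) * hw
  have h3 : HasDerivAt (fun s => Real.cos (lam*s) * Real.cos (ω*s)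
      - lam * ω⁻¹ * (Real.sin (lam*s) * Real.sin (ω*s)))
      (-((lam^2 * ω⁻¹ + ω) * (Real.cos (lam*s) * Real.sin (ω*s)))
        - 2*lam*(Real.sin (lam*s) * Real.cos (ω*s))) s := by
    have := (hcl.mul hco).sub ((hsl.mul hso).const_mul (lam * ω⁻¹))
    refine this.congr_deriv (Eq.symm ?_)
    linear_combination (lam * (Real.sin (lam*s) * Real.cos (ω*s))) * hw
  have h4 : HasDerivAt (fun s => -(lam * ω⁻¹ * (Real.cos (lam*s) * Real.sin (ω*s)))
      - Real.sin (lam*s) * Real.cos (ω*s))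
      ((lam^2 * ω⁻¹ + ω) * (Real.sin (lam*s) * Real.sin (ω*s))
        - 2*lam*(Real.cos (lam*s) * Real.cos (ω*s))) s := by
    have := (((hcl.mul hso).const_mul (lam * ω⁻¹)).neg).sub (hsl.mul hco)
    refine this.congr_deriv (Eq.symm ?_)
    linear_combination (lam * (Real.cos (lam*s) * Real.cos (ω*s))) * hw
  exact (((h1.smul_const p).add (h2.smul_const (qi*p))).add (h3.smul_const v)).add
    (h4.smul_const (qi*v))

lemma sol_ode (lam ω : ℝ) (hw : ω * ω⁻¹ = 1) (hω2 : ω^2 = 1 + lam^2)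
    (p v : Quaternion ℝ) (s : ℝ) :
    sol2 lam ω p v s + sol lam ω p v s + (2 * lam) • (qi * sol1 lam ω p v s) = 0 := by
  simp only [sol, sol1, sol2, mul_add, mul_smul_comm, ← mul_assoc, qi_mul_qi, neg_one_mul]
  match_scalars
  · ring
  · ring
  · linear_combination (ω * (Real.cos (lam*s) * Real.sin (ω*s))) * hw
      - (ω⁻¹ * (Real.cos (lam*s) * Real.sin (ω*s))) * hω2
  · linear_combination (-(ω * (Real.sin (lam*s) * Real.sin (ω*s)))) * hw
      + (ω⁻¹ * (Real.sin (lam*s) * Real.sin (ω*s))) * hω2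

lemma sol_zero (lam ω : ℝ) (p v : Quaternion ℝ) : sol lam ω p v 0 = p := by
  simp [sol]

lemma sol1_zero (lam ω : ℝ) (p v : Quaternion ℝ) : sol1 lam ω p v 0 = v := by
  simp [sol1]

noncomputable def Fode (lam : ℝ) : (Quaternion ℝ × Quaternion ℝ) →L[ℝ] (Quaternion ℝ × Quaternion ℝ) :=
  (ContinuousLinearMap.snd ℝ _ _).prod
    (-(ContinuousLinearMap.fst ℝ (Quaternion ℝ) (Quaternion ℝ))
      - (2*lam) • ((ContinuousLinearMap.mul ℝ (Quaternion ℝ) qi).comp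
          (ContinuousLinearMap.snd ℝ _ _)))

lemma Fode_apply (lam : ℝ) (a b : Quaternion ℝ) :
    Fode lam (a, b) = (b, -a - (2*lam) • (qi * b)) := rfl

/-- Explicit formula for the sub-Riemannian geodesics of `S³`: if `γ` solves the
geodesic equation `D_{γ'}γ' + 2λ J(γ') = 0` (equivalently `γ'' + γ + 2λ(i·γ') = 0`
in `ℝ⁴`) with `γ(0) = p` a unit quaternion and `γ'(0) = v` a unit horizontal
tangent vector at `p`, then
`γ(s) = cos(λs)cos(√(1+λ²)s)·p + [sin(λs)sin(√(1+λ²)s)/√(1+λ²)]·(λp − i·v)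
 − sin(λs)cos(√(1+λ²)s)·(i·p) + [cos(λs)sin(√(1+λ²)s)/√(1+λ²)]·(λ(i·p) + v)`. -/
theorem geodesic_explicit (lam : ℝ) (p v : Quaternion ℝ)
    (γ γ' γ'' : ℝ → Quaternion ℝ)
    (hp : ‖p‖ = 1) (hv : ‖v‖ = 1) (hvp : ⟪v, p⟫ = 0) (hvh : ⟪v, qi * p⟫ = 0)
    (hγ0 : γ 0 = p) (hγ'0 : γ' 0 = v)
    (hd1 : ∀ s, HasDerivAt γ (γ' s) s) (hd2 : ∀ s, HasDerivAt γ' (γ'' s) s)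
    (heq : ∀ s, γ'' s + γ s + (2 * lam) • (qi * γ' s) = 0) :
    ∀ s : ℝ, γ s =
      (Real.cos (lam * s) * Real.cos (Real.sqrt (1 + lam ^ 2) * s)) • p
      + (Real.sin (lam * s) * Real.sin (Real.sqrt (1 + lam ^ 2) * s)
          / Real.sqrt (1 + lam ^ 2)) • (lam • p - qi * v)
      - (Real.sin (lam * s) * Real.cos (Real.sqrt (1 + lam ^ 2) * s)) • (qi * p)
      + (Real.cos (lam * s) * Real.sin (Real.sqrt (1 + lam ^ 2) * s)
          / Real.sqrt (1 + lam ^ 2)) • (lam • (qi * p) + v) := by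
  intro s
  set ω : ℝ := Real.sqrt (1 + lam ^ 2) with hωdef
  have h1pos : (0:ℝ) < 1 + lam ^ 2 := by positivity
  have hω2 : ω ^ 2 = 1 + lam ^ 2 := Real.sq_sqrt h1pos.le
  have hω0 : ω ≠ 0 := by
    rw [hωdef]
    positivity
  have hw : ω * ω⁻¹ = 1 := mul_inv_cancel₀ hω0
  -- the two solutions of the first-order system
  set F : ℝ → Quaternion ℝ × Quaternion ℝ := fun t => (γ t, γ' t) with hF
  set G : ℝ → Quaternion ℝ × Quaternion ℝ :=
    fun t => (sol lam ω p v t, sol1 lam ω p v t) with hG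
  have hFd : ∀ t, HasDerivAt F (Fode lam (F t)) t := by
    intro t
    have h := (hd1 t).prodMk (hd2 t)
    have h2 : γ'' t = -(γ t) - (2*lam) • (qi * γ' t) := by
      linear_combination (norm := module) heq t
    rw [hF, Fode_apply]
    rw [← h2]
    exact h
  have hGd : ∀ t, HasDerivAt G (Fode lam (G t)) t := by
    intro t
    have h := (hasDerivAt_sol lam ω hw hω2 p v t).prodMk (hasDerivAt_sol1 lam ω hw p v t)
    have h2 : sol2 lam ω p v t = -(sol lam ω p v t) - (2*lam) • (qi * sol1 lam ω p v t) := by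
      linear_combination (norm := module) sol_ode lam ω hw hω2 p v t
    rw [hG, Fode_apply, ← h2]
    exact h
  have hkey : F s = G s := by
    have h0 : (0:ℝ) ∈ Set.Ioo (-(|s|+1)) (|s|+1) := by
      constructor <;> [nlinarith [abs_nonneg s]; nlinarith [abs_nonneg s]]
    have hs : s ∈ Set.Icc (-(|s|+1)) (|s|+1) := by
      constructor <;> [nlinarith [neg_abs_le s]; nlinarith [le_abs_self s]]
    have huniq := ODE_solution_unique_of_mem_Icc
      (v := fun _ x => Fode lam x) (s := fun _ => Set.univ)
      (fun _ _ => (Fode lam).lipschitz.lipschitzOnWith)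
      h0
      (Continuous.continuousOn (by
        exact continuous_iff_continuousAt.2 fun t => (hFd t).continuousAt))
      (fun t _ => hFd t) (fun _ _ => Set.mem_univ _)
      (Continuous.continuousOn (by
        exact continuous_iff_continuousAt.2 fun t => (hGd t).continuousAt))
      (fun t _ => hGd t) (fun _ _ => Set.mem_univ _)
      (by
        rw [hF, hG]
        simp [hγ0, hγ'0, sol_zero, sol1_zero])
    exact huniq hs
  have hγs : γ s = sol lam ω p v s := congrArg Prod.fst hkey
  rw [hγs, sol]
  match_scalars <;> ring
end

section
/- For a curve γ in S^3 ⊂ R^4 satisfying γ'' + γ + 2λ(i·γ') = 0 with unit horizontal initial velocity, the functions ⟨γ'(s), i·γ(s)⟩ and |γ'(s)|² are constant along γ; in particular γ stays horizontal and parameterized by arc-length. -/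
open Real
open scoped RealInnerProductSpace

lemma inner_qi_left (a b : Quaternion ℝ) : ⟪qi * a, b⟫ = -⟪a, qi * b⟫ := by
  have h1 : qi.re = 0 := rfl
  have h2 : qi.imI = 1 := rfl
  have h3 : qi.imJ = 0 := rfl
  have h4 : qi.imK = 0 := rfl
  simp only [Quaternion.inner_def, Quaternion.re_mul, Quaternion.imI_mul, Quaternion.imJ_mul,
    Quaternion.imK_mul, Quaternion.re_star, Quaternion.imI_star, Quaternion.imJ_star,
    Quaternion.imK_star, h1, h2, h3, h4]
  ring

lemma inner_qi_qi (a b : Quaternion ℝ) : ⟪qi * a, qi * b⟫ = ⟪a, b⟫ := by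
  have h1 : qi.re = 0 := rfl
  have h2 : qi.imI = 1 := rfl
  have h3 : qi.imJ = 0 := rfl
  have h4 : qi.imK = 0 := rfl
  simp only [Quaternion.inner_def, Quaternion.re_mul, Quaternion.imI_mul, Quaternion.imJ_mul,
    Quaternion.imK_mul, Quaternion.re_star, Quaternion.imI_star, Quaternion.imJ_star,
    Quaternion.imK_star, h1, h2, h3, h4]
  ring

lemma inner_qi_self (a : Quaternion ℝ) : ⟪a, qi * a⟫ = 0 := by
  have h1 := inner_qi_left a a
  have h2 : ⟪qi * a, a⟫ = ⟪a, qi * a⟫ := real_inner_comm _ _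
  linarith

lemma const_of_hasDerivAt_zero (F : ℝ → ℝ) (hF : ∀ s, HasDerivAt F 0 s) (s : ℝ) :
    F s = F 0 :=
  is_const_of_deriv_eq_zero (fun x => (hF x).differentiableAt) (fun x => (hF x).deriv) s 0

/-- Along any solution of `γ'' + γ + 2λ(i·γ') = 0` on `S³` with unit horizontal
tangent initial velocity, the functions `⟨γ', i·γ⟩` and `|γ'|²` are constant:
the curve stays horizontal and parameterized by arc-length. -/
theorem geodesic_horizontal_arclength (lam : ℝ) (γ γ' γ'' : ℝ → Quaternion ℝ)
    (hp : ‖γ 0‖ = 1) (hv : ‖γ' 0‖ = 1)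
    (htan : ⟪γ' 0, γ 0⟫ = 0) (hhor : ⟪γ' 0, qi * γ 0⟫ = 0)
    (hd1 : ∀ s, HasDerivAt γ (γ' s) s) (hd2 : ∀ s, HasDerivAt γ' (γ'' s) s)
    (heq : ∀ s, γ'' s + γ s + (2 * lam) • (qi * γ' s) = 0) :
    ∀ s : ℝ, ⟪γ' s, qi * γ s⟫ = 0 ∧ ‖γ' s‖ = 1 := by
  have hγ'' : ∀ s, γ'' s = -(γ s) - (2 * lam) • (qi * γ' s) := by
    intro s
    have h := heq s
    have : γ'' s + (γ s + (2 * lam) • (qi * γ' s)) = 0 := by rw [← add_assoc]; exact h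
    have := eq_neg_of_add_eq_zero_left this
    rw [this, neg_add]
    abel
  set h : ℝ → ℝ := fun s => ⟪γ s, γ s⟫ with hh_def
  set k : ℝ → ℝ := fun s => ⟪γ' s, γ s⟫ with hk_def
  set f : ℝ → ℝ := fun s => ⟪γ' s, qi * γ s⟫ with hf_def
  set g : ℝ → ℝ := fun s => ⟪γ' s, γ' s⟫ with hg_def
  -- derivatives
  have hdh : ∀ s, HasDerivAt h (2 * k s) s := by
    intro s
    have H := (hd1 s).inner ℝ (hd1 s)
    refine H.congr_deriv (Eq.symm ?_)
    simp only [hk_def, real_inner_comm (γ s) (γ' s)]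
    ring
  have hdk : ∀ s, HasDerivAt k (g s - h s + 2 * lam * f s) s := by
    intro s
    have H := (hd2 s).inner ℝ (hd1 s)
    refine H.congr_deriv (Eq.symm ?_)
    rw [hγ'' s]
    simp only [inner_sub_left, inner_neg_left, real_inner_smul_left, inner_qi_left]
    simp only [hg_def, hh_def, hf_def]
    ring
  have hdf : ∀ s, HasDerivAt f (-(2 * lam) * k s) s := by
    intro s
    have H := (hd2 s).inner ℝ ((hd1 s).const_mul qi)
    refine H.congr_deriv (Eq.symm ?_)
    rw [hγ'' s]
    simp only [inner_sub_left, inner_neg_left, real_inner_smul_left,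
      inner_qi_qi, inner_qi_self]
    simp only [hk_def]
    ring
  have hdg : ∀ s, HasDerivAt g (-(2 * k s)) s := by
    intro s
    have H2 := HasDerivAt.inner ℝ (hd2 s) (hd2 s)
    refine H2.congr_deriv (Eq.symm ?_)
    rw [hγ'' s]
    have hc : ⟪qi * γ' s, γ' s⟫ = 0 := by
      have := inner_qi_left (γ' s) (γ' s)
      have h2 := inner_qi_self (γ' s)
      linarith
    have hc3 : ⟪γ s, γ' s⟫ = k s := real_inner_comm _ _
    simp only [inner_sub_left, inner_sub_right, inner_neg_left, inner_neg_right,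
      real_inner_smul_left, real_inner_smul_right, inner_qi_self, hc, hc3]
    simp only [hk_def]
    ring
  -- initial values
  have hh0 : h 0 = 1 := by
    simp only [hh_def, real_inner_self_eq_norm_sq, hp]; norm_num
  have hg0 : g 0 = 1 := by
    simp only [hg_def, real_inner_self_eq_norm_sq, hv]; norm_num
  -- conserved quantities
  have hA : ∀ s, g s + h s = 2 := by
    intro s
    have := const_of_hasDerivAt_zero (fun s => g s + h s)
      (fun s => ((hdg s).add (hdh s)).congr_deriv (by ring)) s
    rw [this, hg0, hh0]; norm_num
  have hB : ∀ s, f s + lam * h s = lam := by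
    intro s
    have := const_of_hasDerivAt_zero (fun s => f s + lam * h s)
      (fun s => by
        have := (hdf s).add ((hdh s).const_mul lam)
        refine this.congr_deriv (Eq.symm ?_)
        ring) s
    rw [this, hf_def]
    simp only [hhor, hh0]
    ring
  -- the key quantity Q = k² + (1+λ²)(1-h)²
  have hQd : ∀ s, HasDerivAt (fun s => k s ^ 2 + (1 + lam ^ 2) * (1 - h s) ^ 2) 0 s := by
    intro s
    have hk' : HasDerivAt (fun s => k s ^ 2)
        (2 * k s * (g s - h s + 2 * lam * f s)) s := by
      have := (hdk s).pow 2
      refine this.congr_deriv (Eq.symm ?_)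
      ring
    have h1h : HasDerivAt (fun s => (1 : ℝ) - h s) (-(2 * k s)) s := by
      exact ((hasDerivAt_const s (1 : ℝ)).sub (hdh s)).congr_deriv (by ring)
    have hh' : HasDerivAt (fun s => (1 + lam ^ 2) * (1 - h s) ^ 2)
        ((1 + lam ^ 2) * (2 * (1 - h s) * (-(2 * k s)))) s := by
      have := (h1h.pow 2).const_mul (1 + lam ^ 2)
      refine this.congr_deriv (Eq.symm ?_)
      ring
    have := hk'.add hh'
    refine this.congr_deriv (Eq.symm ?_)
    have hAs := hA s
    have hBs := hB s
    linear_combination (-(2 * k s)) * hAs - (4 * lam * k s) * hBs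
  have hQ : ∀ s, k s ^ 2 + (1 + lam ^ 2) * (1 - h s) ^ 2 = 0 := by
    intro s
    have := const_of_hasDerivAt_zero _ hQd s
    rw [this, hh0]
    simp only [hk_def]
    rw [htan]
    norm_num
  intro s
  have hQs := hQ s
  have hk0 : k s = 0 ∧ h s = 1 := by
    have h1 : k s ^ 2 ≥ 0 := sq_nonneg _
    have h2 : (1 + lam ^ 2) * (1 - h s) ^ 2 ≥ 0 := by positivity
    have hk2 : k s ^ 2 = 0 := by linarith
    have hh2 : (1 + lam ^ 2) * (1 - h s) ^ 2 = 0 := by linarith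
    constructor
    · exact pow_eq_zero_iff (by norm_num) |>.mp hk2
    · have hlam : (1 + lam ^ 2) ≠ 0 := by positivity
      have := (mul_eq_zero.mp hh2).resolve_left hlam
      have := pow_eq_zero_iff (n := 2) (by norm_num) |>.mp this
      linarith
  obtain ⟨hks, hhs⟩ := hk0
  constructor
  · have := hB s
    rw [hhs] at this
    simp only [hf_def] at this ⊢
    linarith
  · have hgs : g s = 1 := by have := hA s; rw [hhs] at this; linarith
    have : ⟪γ' s, γ' s⟫ = 1 := hgs
    rw [real_inner_self_eq_norm_sq] at this
    nlinarith [norm_nonneg (γ' s)]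
end

section
/- Let T_ρ ⊂ S^3 be the Clifford torus {(z1,z2) ∈ C² : |z1|²=ρ², |z2|²=1−ρ²} for ρ ∈ (0,1), let q ∈ T_ρ, and let w = i·(αz1, −α⁻¹z2) with α = √(1−ρ²)/ρ be the unit horizontal tangent vector to T_ρ at q. Then the geodesic γ of curvature λ with γ(0)=q, γ'(0)=w is entirely contained in T_ρ if and only if λ = (2ρ²−1)/(2ρ√(1−ρ²)). -/
open Real
open scoped RealInnerProductSpace

/-- Energy argument: if `P' = Q`, `Q' = -c P` with `c > 0` and `P 0 = Q 0 = 0`,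
then `P ≡ 0`. -/
lemma aux_energy (c : ℝ) (hc : 0 < c) (P Q : ℝ → ℝ)
    (hP : ∀ s, HasDerivAt P (Q s) s) (hQ : ∀ s, HasDerivAt Q (-c * P s) s)
    (hP0 : P 0 = 0) (hQ0 : Q 0 = 0) : ∀ s, P s = 0 := by
  have hdE : ∀ s, HasDerivAt (fun t => Q t ^ 2 + c * P t ^ 2) 0 s := by
    intro s
    have h1 := ((hQ s).fun_pow 2).fun_add (((hP s).fun_pow 2).const_mul c)
    refine h1.congr_deriv ?_
    ring
  have hconst : ∀ s, Q s ^ 2 + c * P s ^ 2 = Q 0 ^ 2 + c * P 0 ^ 2 := fun s =>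
    is_const_of_deriv_eq_zero (fun x => (hdE x).differentiableAt)
      (fun x => (hdE x).deriv) s 0
  intro s
  have h := hconst s
  rw [hP0, hQ0] at h
  have h1 : c * P s ^ 2 ≤ c * 0 := by rw [mul_zero]; nlinarith [sq_nonneg (Q s)]
  have h2 : P s ^ 2 = 0 :=
    le_antisymm (le_of_mul_le_mul_left h1 hc) (sq_nonneg _)
  exact pow_eq_zero_iff two_ne_zero |>.1 h2

/-- Let `T_ρ ⊂ S³` be the Clifford torus `|z1|² = ρ²`, `q = (z1,z2) ∈ T_ρ`, and
`w = i·(αz1, −α⁻¹z2)` with `α = √(1−ρ²)/ρ` the unit horizontal tangent vector to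
`T_ρ` at `q`.  The geodesic `γ` of curvature `λ` with `γ(0)=q`, `γ'(0)=w` is
entirely contained in `T_ρ` if and only if `λ = (2ρ²−1)/(2ρ√(1−ρ²))`. -/
theorem geodesic_in_clifford_torus (ρ lam : ℝ) (hρ : ρ ∈ Set.Ioo (0:ℝ) 1)
    (q : Quaternion ℝ) (hq : ‖q‖ = 1) (hqT : q.re ^ 2 + q.imI ^ 2 = ρ ^ 2)
    (γ γ' γ'' : ℝ → Quaternion ℝ)
    (hγ0 : γ 0 = q)
    (hγ'0 : γ' 0 = qi * ⟨Real.sqrt (1 - ρ ^ 2) / ρ * q.re,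
        Real.sqrt (1 - ρ ^ 2) / ρ * q.imI,
        -(q.imJ * (ρ / Real.sqrt (1 - ρ ^ 2))),
        -(q.imK * (ρ / Real.sqrt (1 - ρ ^ 2)))⟩)
    (hd1 : ∀ s, HasDerivAt γ (γ' s) s) (hd2 : ∀ s, HasDerivAt γ' (γ'' s) s)
    (heq : ∀ s, γ'' s + γ s + (2 * lam) • (qi * γ' s) = 0) :
    (∀ s, (γ s).re ^ 2 + (γ s).imI ^ 2 = ρ ^ 2) ↔
      lam = (2 * ρ ^ 2 - 1) / (2 * ρ * Real.sqrt (1 - ρ ^ 2)) := by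
  obtain ⟨hρ0, hρ1⟩ := hρ
  have hs2 : Real.sqrt (1 - ρ ^ 2) ^ 2 = 1 - ρ ^ 2 := Real.sq_sqrt (by nlinarith)
  have hs0 : 0 < Real.sqrt (1 - ρ ^ 2) := Real.sqrt_pos.2 (by nlinarith)
  set sq : ℝ := Real.sqrt (1 - ρ ^ 2) with hsqdef
  set α : ℝ := sq / ρ with hαdef
  have hα0 : 0 < α := div_pos hs0 hρ0
  -- quaternion `i`-multiplication facts
  have hqire : ∀ p : Quaternion ℝ, (qi * p).re = -p.imI := by
    intro p
    rw [Quaternion.re_mul]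
    norm_num [qi]
  have hqiimI : ∀ p : Quaternion ℝ, (qi * p).imI = p.re := by
    intro p
    rw [Quaternion.imI_mul]
    norm_num [qi]
  -- component derivatives
  have hdA : ∀ s, HasDerivAt (fun t => (γ t).re) ((γ' s).re) s := fun s =>
    (LinearMap.toContinuousLinearMap
      (show Quaternion ℝ →ₗ[ℝ] ℝ from QuaternionAlgebra.reₗ (-1) 0 (-1))).hasFDerivAt.comp_hasDerivAt s
      (hd1 s)
  have hdB : ∀ s, HasDerivAt (fun t => (γ t).imI) ((γ' s).imI) s := fun s =>
    (LinearMap.toContinuousLinearMap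
      (show Quaternion ℝ →ₗ[ℝ] ℝ from QuaternionAlgebra.imIₗ (-1) 0 (-1))).hasFDerivAt.comp_hasDerivAt s
      (hd1 s)
  have hdA' : ∀ s, HasDerivAt (fun t => (γ' t).re) ((γ'' s).re) s := fun s =>
    (LinearMap.toContinuousLinearMap
      (show Quaternion ℝ →ₗ[ℝ] ℝ from QuaternionAlgebra.reₗ (-1) 0 (-1))).hasFDerivAt.comp_hasDerivAt s
      (hd2 s)
  have hdB' : ∀ s, HasDerivAt (fun t => (γ' t).imI) ((γ'' s).imI) s := fun s =>
    (LinearMap.toContinuousLinearMap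
      (show Quaternion ℝ →ₗ[ℝ] ℝ from QuaternionAlgebra.imIₗ (-1) 0 (-1))).hasFDerivAt.comp_hasDerivAt s
      (hd2 s)
  -- componentwise ODE
  have hodere : ∀ s, (γ'' s).re = -(γ s).re + 2 * lam * (γ' s).imI := by
    intro s
    have h := congrArg QuaternionAlgebra.re (heq s)
    simp only [Quaternion.re_add, Quaternion.re_smul, Quaternion.re_zero, smul_eq_mul,
      hqire] at h
    linarith
  have hodeimI : ∀ s, (γ'' s).imI = -(γ s).imI - 2 * lam * (γ' s).re := by
    intro s
    have h := congrArg QuaternionAlgebra.imI (heq s)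
    simp only [Quaternion.imI_add, Quaternion.imI_smul, Quaternion.imI_zero, smul_eq_mul,
      hqiimI] at h
    linarith
  -- initial values of the velocity components
  have hA'0 : (γ' 0).re = -(α * q.imI) := by
    rw [hγ'0]; exact hqire _
  have hB'0 : (γ' 0).imI = α * q.re := by
    rw [hγ'0]; exact hqiimI _
  -- the functions P = F', Q = F''
  have hdF : ∀ s, HasDerivAt (fun t => (γ t).re ^ 2 + (γ t).imI ^ 2)
      (2 * ((γ s).re * (γ' s).re + (γ s).imI * (γ' s).imI)) s := by
    intro s
    have h1 := ((hdA s).fun_pow 2).fun_add ((hdB s).fun_pow 2)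
    refine h1.congr_deriv ?_
    ring
  have hdP : ∀ s, HasDerivAt
      (fun t => 2 * ((γ t).re * (γ' t).re + (γ t).imI * (γ' t).imI))
      (2 * ((γ' s).re ^ 2 + (γ' s).imI ^ 2) - 2 * ((γ s).re ^ 2 + (γ s).imI ^ 2)
        + 4 * lam * ((γ s).re * (γ' s).imI - (γ s).imI * (γ' s).re)) s := by
    intro s
    have h1 := (((hdA s).fun_mul (hdA' s)).fun_add ((hdB s).fun_mul (hdB' s))).const_mul (2:ℝ)
    refine h1.congr_deriv ?_
    rw [hodere s, hodeimI s]
    ring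
  have hdQ : ∀ s, HasDerivAt
      (fun t => 2 * ((γ' t).re ^ 2 + (γ' t).imI ^ 2) - 2 * ((γ t).re ^ 2 + (γ t).imI ^ 2)
        + 4 * lam * ((γ t).re * (γ' t).imI - (γ t).imI * (γ' t).re))
      (-(4 * (1 + lam ^ 2)) * (2 * ((γ s).re * (γ' s).re + (γ s).imI * (γ' s).imI))) s := by
    intro s
    have h1 := (((((hdA' s).fun_pow 2).fun_add ((hdB' s).fun_pow 2)).const_mul (2:ℝ)).fun_sub
        ((((hdA s).fun_pow 2).fun_add ((hdB s).fun_pow 2)).const_mul (2:ℝ))).fun_add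
      ((((hdA s).fun_mul (hdB' s)).fun_sub ((hdB s).fun_mul (hdA' s))).const_mul (4 * lam))
    refine h1.congr_deriv ?_
    rw [hodere s, hodeimI s]
    ring
  -- initial values P 0, Q 0
  have hP0 : 2 * ((γ 0).re * (γ' 0).re + (γ 0).imI * (γ' 0).imI) = 0 := by
    rw [hγ0, hA'0, hB'0]
    ring
  have hQ0 : 2 * ((γ' 0).re ^ 2 + (γ' 0).imI ^ 2) - 2 * ((γ 0).re ^ 2 + (γ 0).imI ^ 2)
      + 4 * lam * ((γ 0).re * (γ' 0).imI - (γ 0).imI * (γ' 0).re)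
      = 2 * ρ ^ 2 * (α ^ 2 - 1 + 2 * lam * α) := by
    rw [hγ0, hA'0, hB'0]
    linear_combination (2 * α ^ 2 - 2 + 4 * lam * α) * hqT
  -- the key algebraic equivalence
  have hT : α ^ 2 - 1 + 2 * ((2 * ρ ^ 2 - 1) / (2 * ρ * sq)) * α = 0 := by
    rw [hαdef]
    field_simp
    linear_combination hs2
  have hkey : α ^ 2 - 1 + 2 * lam * α = 0 ↔ lam = (2 * ρ ^ 2 - 1) / (2 * ρ * sq) := by
    constructor
    · intro h
      have h4 : lam * α = ((2 * ρ ^ 2 - 1) / (2 * ρ * sq)) * α := by linarith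
      exact mul_right_cancel₀ (ne_of_gt hα0) h4
    · intro h
      rw [h]
      exact hT
  constructor
  · intro hconst
    -- F constant forces P ≡ 0, hence Q 0 = 0
    have hPz : ∀ s, 2 * ((γ s).re * (γ' s).re + (γ s).imI * (γ' s).imI) = 0 := by
      intro s
      have h1 := hdF s
      have h2 : (fun t => (γ t).re ^ 2 + (γ t).imI ^ 2) = fun _ : ℝ => ρ ^ 2 :=
        funext hconst
      rw [h2] at h1
      exact h1.unique (hasDerivAt_const s _)
    have h1 := hdP 0
    have h2 : (fun t => 2 * ((γ t).re * (γ' t).re + (γ t).imI * (γ' t).imI))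
        = fun _ : ℝ => (0:ℝ) := funext hPz
    rw [h2] at h1
    have hQz := h1.unique (hasDerivAt_const 0 _)
    rw [hQ0] at hQz
    have hcond : α ^ 2 - 1 + 2 * lam * α = 0 := by
      rcases mul_eq_zero.1 hQz with h | h
      · nlinarith
      · exact h
    exact hkey.1 hcond
  · intro hlam
    have hcond := hkey.2 hlam
    have hQ0z : 2 * ((γ' 0).re ^ 2 + (γ' 0).imI ^ 2)
        - 2 * ((γ 0).re ^ 2 + (γ 0).imI ^ 2)
        + 4 * lam * ((γ 0).re * (γ' 0).imI - (γ 0).imI * (γ' 0).re) = 0 := by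
      rw [hQ0, hcond]
      ring
    have hPz := aux_energy (4 * (1 + lam ^ 2)) (by positivity)
      (fun t => 2 * ((γ t).re * (γ' t).re + (γ t).imI * (γ' t).imI))
      (fun t => 2 * ((γ' t).re ^ 2 + (γ' t).imI ^ 2)
        - 2 * ((γ t).re ^ 2 + (γ t).imI ^ 2)
        + 4 * lam * ((γ t).re * (γ' t).imI - (γ t).imI * (γ' t).re))
      hdP hdQ hP0 hQ0z
    intro s
    have hFc : (fun t => (γ t).re ^ 2 + (γ t).imI ^ 2) s
        = (fun t => (γ t).re ^ 2 + (γ t).imI ^ 2) 0 :=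
      is_const_of_deriv_eq_zero (fun x => (hdF x).differentiableAt)
        (fun x => by rw [(hdF x).deriv]; exact hPz x) s 0
    simpa [hγ0, hqT] using hFc
end

section
/- Let γ be a geodesic of curvature λ in the sub-Riemannian S^3 and X the variational vector field of a variation of γ by horizontal curves parameterized by arc-length. Then the function λ⟨X, V(γ)⟩ + ⟨X, γ'⟩ is constant along γ, where V(q)=i·q. -/
open Real
open scoped RealInnerProductSpace

lemma qi_skew (a b : Quaternion ℝ) : ⟪qi*a, b⟫ = -⟪a, qi*b⟫ := by
  simp only [Quaternion.inner_def]
  simp only [Quaternion.re_mul, Quaternion.re_star, Quaternion.imI_star, Quaternion.imJ_star,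
    Quaternion.imK_star, Quaternion.imI_mul, Quaternion.imJ_mul, Quaternion.imK_mul]
  simp [qi]
  ring


/-- Let `γ(s) = F(s,0)` be a geodesic of curvature `λ` in the sub-Riemannian `S³`
and `X(s) = ∂F/∂ε(s,0)` the variational vector field of a C² variation `F` of `γ`
by horizontal curves parameterized by arc-length.  Then the function
`λ⟨X, V(γ)⟩ + ⟨X, γ'⟩`, with `V(q) = i·q`, is constant along `γ`. -/
theorem jacobi_first_integral (lam : ℝ)
    (F Fs Fe : ℝ → ℝ → Quaternion ℝ) (γ'' : ℝ → Quaternion ℝ)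
    (hC : ContDiff ℝ 2 (fun q : ℝ × ℝ => F q.1 q.2))
    (hFs : ∀ s ε, HasDerivAt (fun t => F t ε) (Fs s ε) s)
    (hFe : ∀ s ε, HasDerivAt (fun e => F s e) (Fe s ε) ε)
    (hsph : ∀ s ε, ‖F s ε‖ = 1)
    (hunit : ∀ s ε, ‖Fs s ε‖ = 1)
    (hhor : ∀ s ε, ⟪Fs s ε, qi * F s ε⟫ = 0)
    (hd2 : ∀ s, HasDerivAt (fun t => Fs t 0) (γ'' s) s)
    (hgeo : ∀ s, γ'' s + F s 0 + (2 * lam) • (qi * Fs s 0) = 0) :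
    ∀ s₁ s₂ : ℝ,
      lam * ⟪Fe s₁ 0, qi * F s₁ 0⟫ + ⟪Fe s₁ 0, Fs s₁ 0⟫ =
      lam * ⟪Fe s₂ 0, qi * F s₂ 0⟫ + ⟪Fe s₂ 0, Fs s₂ 0⟫ := by
  set g : ℝ × ℝ → Quaternion ℝ := fun q => F q.1 q.2 with hg
  have hdiff : Differentiable ℝ g := hC.differentiable (by norm_num)
  set D : ℝ × ℝ → (ℝ × ℝ →L[ℝ] Quaternion ℝ) := fderiv ℝ g with hDdef
  have hD1 : ∀ p : ℝ × ℝ, D p (1, 0) = Fs p.1 p.2 := by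
    intro p
    have hc : HasDerivAt (fun t : ℝ => (t, p.2)) ((1 : ℝ), (0 : ℝ)) p.1 :=
      (hasDerivAt_id p.1).prodMk (hasDerivAt_const p.1 p.2)
    have := ((hdiff (p.1, p.2)).hasFDerivAt.comp_hasDerivAt p.1 hc)
    exact this.unique (hFs p.1 p.2)
  have hD2 : ∀ p : ℝ × ℝ, D p (0, 1) = Fe p.1 p.2 := by
    intro p
    have hc : HasDerivAt (fun e : ℝ => (p.1, e)) ((0 : ℝ), (1 : ℝ)) p.2 :=
      (hasDerivAt_const p.2 p.1).prodMk (hasDerivAt_id p.2)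
    have := ((hdiff (p.1, p.2)).hasFDerivAt.comp_hasDerivAt p.2 hc)
    exact this.unique (hFe p.1 p.2)
  have hDc : ContDiff ℝ 1 D := hC.fderiv_right (m := 1) (by norm_num)
  have hDdiff : Differentiable ℝ D := hDc.differentiable one_ne_zero
  set D' : ℝ × ℝ → (ℝ × ℝ →L[ℝ] (ℝ × ℝ →L[ℝ] Quaternion ℝ)) := fderiv ℝ D with hD'def
  have hsymm : ∀ p : ℝ × ℝ, ∀ v w, D' p v w = D' p w v := by
    intro p v w
    exact second_derivative_symmetric (fun y => (hdiff y).hasFDerivAt)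
      (hDdiff p).hasFDerivAt v w
  -- the mixed second derivative
  set X' : ℝ → Quaternion ℝ := fun s => D' (s, 0) (1, 0) (0, 1) with hX'def
  -- s ↦ Fe s 0 has derivative X' s
  have h3 : ∀ s, HasDerivAt (fun t => Fe t 0) (X' s) s := by
    intro s
    have hc : HasDerivAt (fun t : ℝ => (t, (0:ℝ))) ((1 : ℝ), (0 : ℝ)) s :=
      (hasDerivAt_id s).prodMk (hasDerivAt_const s 0)
    have h1 : HasDerivAt (fun t : ℝ => D (t, 0)) (D' (s, 0) (1, 0)) s :=
      (hDdiff (s, 0)).hasFDerivAt.comp_hasDerivAt (l := D) s hc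
    have h2 := h1.clm_apply (hasDerivAt_const s ((0:ℝ),(1:ℝ)))
    simp only [map_zero, add_zero] at h2
    have : (fun t : ℝ => (D (t, 0)) (0, 1)) = fun t => Fe t 0 := by
      funext t; exact hD2 (t, 0)
    rwa [this] at h2
  -- e ↦ Fs s e has derivative X' s at 0
  have h4 : ∀ s, HasDerivAt (fun e => Fs s e) (X' s) 0 := by
    intro s
    have hc : HasDerivAt (fun e : ℝ => (s, e)) ((0 : ℝ), (1 : ℝ)) 0 :=
      (hasDerivAt_const 0 s).prodMk (hasDerivAt_id 0)
    have h1 : HasDerivAt (fun e : ℝ => D (s, e)) (D' (s, 0) (0, 1)) 0 :=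
      (hDdiff (s, 0)).hasFDerivAt.comp_hasDerivAt (l := D) 0 hc
    have h2 := h1.clm_apply (hasDerivAt_const 0 ((1:ℝ),(0:ℝ)))
    simp only [map_zero, add_zero] at h2
    have he : (fun e : ℝ => (D (s, e)) (1, 0)) = fun e => Fs s e := by
      funext e; exact hD1 (s, e)
    rw [he] at h2
    rwa [hsymm (s, 0) (0,1) (1,0)] at h2
  -- constraints
  have hXγ : ∀ s, ⟪Fe s 0, F s 0⟫ = 0 := by
    intro s
    have hcst : (fun e : ℝ => ⟪F s e, F s e⟫) = fun _ => (1:ℝ) := by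
      funext e
      rw [real_inner_self_eq_norm_sq, hsph s e]; norm_num
    have hder : HasDerivAt (fun e : ℝ => ⟪F s e, F s e⟫)
        (⟪F s 0, Fe s 0⟫ + ⟪Fe s 0, F s 0⟫) 0 := (hFe s 0).inner ℝ (hFe s 0)
    rw [hcst] at hder
    have := hder.unique (hasDerivAt_const 0 1)
    rw [real_inner_comm (Fe s 0) (F s 0)] at this
    linarith
  have hX'γ' : ∀ s, ⟪X' s, Fs s 0⟫ = 0 := by
    intro s
    have hcst : (fun e : ℝ => ⟪Fs s e, Fs s e⟫) = fun _ => (1:ℝ) := by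
      funext e
      rw [real_inner_self_eq_norm_sq, hunit s e]; norm_num
    have hder : HasDerivAt (fun e : ℝ => ⟪Fs s e, Fs s e⟫)
        (⟪Fs s 0, X' s⟫ + ⟪X' s, Fs s 0⟫) 0 := (h4 s).inner ℝ (h4 s)
    rw [hcst] at hder
    have := hder.unique (hasDerivAt_const 0 1)
    rw [real_inner_comm (X' s) (Fs s 0)] at this
    linarith
  have hhor' : ∀ s, ⟪X' s, qi * F s 0⟫ + ⟪Fs s 0, qi * Fe s 0⟫ = 0 := by
    intro s
    have hmul : HasDerivAt (fun e : ℝ => qi * F s e) (qi * Fe s 0) 0 :=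
      (hFe s 0).const_mul qi
    have hder : HasDerivAt (fun e : ℝ => ⟪Fs s e, qi * F s e⟫)
        (⟪Fs s 0, qi * Fe s 0⟫ + ⟪X' s, qi * F s 0⟫) 0 := (h4 s).inner ℝ hmul
    have hcst : (fun e : ℝ => ⟪Fs s e, qi * F s e⟫) = fun _ => (0:ℝ) := by
      funext e; exact hhor s e
    rw [hcst] at hder
    have := hder.unique (hasDerivAt_const 0 0)
    linarith
  -- the conserved quantity has derivative zero
  have hkey : ∀ s, HasDerivAt
      (fun t => lam * ⟪Fe t 0, qi * F t 0⟫ + ⟪Fe t 0, Fs t 0⟫) 0 s := by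
    intro s
    have hmul : HasDerivAt (fun t : ℝ => qi * F t 0) (qi * Fs s 0) s :=
      (hFs s 0).const_mul qi
    have h1 : HasDerivAt (fun t : ℝ => ⟪Fe t 0, qi * F t 0⟫)
        (⟪Fe s 0, qi * Fs s 0⟫ + ⟪X' s, qi * F s 0⟫) s := (h3 s).inner ℝ hmul
    have h2 : HasDerivAt (fun t : ℝ => ⟪Fe t 0, Fs t 0⟫)
        (⟪Fe s 0, γ'' s⟫ + ⟪X' s, Fs s 0⟫) s := (h3 s).inner ℝ (hd2 s)
    have hsum := (h1.const_mul lam).add h2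
    have hγ'' : γ'' s = -F s 0 - (2*lam) • (qi * Fs s 0) := by
      have h := hgeo s
      rw [add_assoc] at h
      rw [eq_neg_of_add_eq_zero_left h, neg_add, sub_eq_add_neg]
    have e1 : ⟪X' s, qi * F s 0⟫ = ⟪Fe s 0, qi * Fs s 0⟫ := by
      have h := hhor' s
      have h2 : ⟪Fs s 0, qi * Fe s 0⟫ = -⟪qi * Fs s 0, Fe s 0⟫ := by
        rw [qi_skew, neg_neg]
      rw [h2, real_inner_comm (Fe s 0) (qi * Fs s 0)] at h
      linarith
    have e2 : ⟪Fe s 0, γ'' s⟫ = -⟪Fe s 0, F s 0⟫ - (2*lam) * ⟪Fe s 0, qi * Fs s 0⟫ := by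
      rw [hγ'']
      rw [inner_sub_right, inner_neg_right, real_inner_smul_right]
    have hz : lam * (⟪Fe s 0, qi * Fs s 0⟫ + ⟪X' s, qi * F s 0⟫)
        + (⟪Fe s 0, γ'' s⟫ + ⟪X' s, Fs s 0⟫) = 0 := by
      rw [e1, e2, hX'γ' s, hXγ s]; ring
    rwa [hz] at hsum
  intro s₁ s₂
  have : ∀ t : ℝ, (fun u => lam * ⟪Fe u 0, qi * F u 0⟫ + ⟪Fe u 0, Fs u 0⟫) t
      = (fun u => lam * ⟪Fe u 0, qi * F u 0⟫ + ⟪Fe u 0, Fs u 0⟫) 0 := by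
    intro t
    exact is_const_of_deriv_eq_zero (fun u => (hkey u).differentiableAt)
      (fun u => (hkey u).deriv) t 0
  simp only at this
  rw [this s₁, this s₂]
end

section
/- The map F(θ,s)=γ_θ(s) (geodesics of curvature λ from p=(1,0,0,0)) restricted to θ∈[0,2π), s∈(0,π/√(1+λ²)) is injective: if γ_{θ1}(s1)=γ_{θ2}(s2) with s1,s2 in the open interval, then s1=s2 and θ1=θ2. -/
open Real
open scoped RealInnerProductSpace

lemma osc_unique (m : ℝ) (hm : 0 < m) (g g' : ℝ → ℝ)
    (h1 : ∀ s, HasDerivAt g (g' s) s)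
    (h2 : ∀ s, HasDerivAt g' (-(m^2) * g s) s) :
    ∀ s, g s = g 0 * Real.cos (m*s) + g' 0 * (Real.sin (m*s)/m) := by
  intro t
  set c := g 0 with hc
  set v := g' 0 with hv
  have hms : ∀ s : ℝ, HasDerivAt (fun s : ℝ => m * s) m s := by
    intro s
    simpa using (hasDerivAt_id s).const_mul m
  have hcos : ∀ s : ℝ, HasDerivAt (fun s => Real.cos (m*s)) (-(m * Real.sin (m*s))) s := by
    intro s
    have := (Real.hasDerivAt_cos (m*s)).comp s (hms s)
    exact this.congr_deriv (by ring)
  have hsin : ∀ s : ℝ, HasDerivAt (fun s => Real.sin (m*s)) (m * Real.cos (m*s)) s := by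
    intro s
    have := (Real.hasDerivAt_sin (m*s)).comp s (hms s)
    exact this.congr_deriv (by ring)
  have hexp : ∀ s : ℝ, HasDerivAt (fun s => c * Real.cos (m*s) + v * Real.sin (m*s) / m)
      (-(c*m) * Real.sin (m*s) + v * Real.cos (m*s)) s := by
    intro s
    have H := ((hcos s).const_mul c).add (((hsin s).const_mul v).div_const m)
    have heq : c * -(m * Real.sin (m*s)) + v * (m * Real.cos (m*s)) / m
        = -(c*m) * Real.sin (m*s) + v * Real.cos (m*s) := by
      field_simp
    rw [heq] at H
    exact H
  have hexp' : ∀ s : ℝ, HasDerivAt (fun s => -(c*m) * Real.sin (m*s) + v * Real.cos (m*s))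
      (-(m^2) * (c * Real.cos (m*s) + v * Real.sin (m*s) / m)) s := by
    intro s
    have H := ((hsin s).const_mul (-(c*m))).add ((hcos s).const_mul v)
    have heq : -(c*m) * (m * Real.cos (m*s)) + v * -(m * Real.sin (m*s))
        = -(m^2) * (c * Real.cos (m*s) + v * Real.sin (m*s) / m) := by
      field_simp
      ring
    rw [heq] at H
    exact H
  set h : ℝ → ℝ := fun s => g s - (c * Real.cos (m*s) + v * Real.sin (m*s) / m) with hh
  set h' : ℝ → ℝ := fun s => g' s - (-(c*m) * Real.sin (m*s) + v * Real.cos (m*s)) with hh'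
  have hdh : ∀ s, HasDerivAt h (h' s) s := fun s => (h1 s).sub (hexp s)
  have hdh' : ∀ s, HasDerivAt h' (-(m^2) * h s) s := by
    intro s
    have H := (h2 s).sub (hexp' s)
    exact H.congr_deriv (by simp only [hh]; ring)
  set E : ℝ → ℝ := fun s => m^2 * (h s)^2 + (h' s)^2 with hE
  have hdE : ∀ s, HasDerivAt E 0 s := by
    intro s
    have := (((hdh s).pow 2).const_mul (m^2)).add ((hdh' s).pow 2)
    exact this.congr_deriv (by ring)
  have hconst : ∀ s, E s = E 0 :=
    fun s => is_const_of_deriv_eq_zero (fun x => (hdE x).differentiableAt)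
      (fun x => (hdE x).deriv) s 0
  have hE0 : E 0 = 0 := by
    have h0 : h 0 = 0 := by simp [hh, hc, hv]
    have h0' : h' 0 = 0 := by simp [hh', hv]
    simp [hE, h0, h0']
  have hEt' : m^2 * (h t)^2 + (h' t)^2 = 0 := by
    have := (hconst t).trans hE0
    simpa [hE] using this
  have hht : h t = 0 := by
    have : (h t)^2 = 0 := by nlinarith [sq_nonneg (h t), sq_nonneg (h' t), pow_pos hm 2]
    exact pow_eq_zero_iff (by norm_num) |>.mp this
  have hfin : g t - (c * Real.cos (m*t) + v * Real.sin (m*t) / m) = 0 := hht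
  linear_combination hfin

lemma complex_ode (lam : ℝ) (z z' z'' : ℝ → ℂ)
    (h1 : ∀ s, HasDerivAt z (z' s) s) (h2 : ∀ s, HasDerivAt z' (z'' s) s)
    (hode : ∀ s, z'' s + z s + 2 * (lam:ℂ) * (Complex.I * z' s) = 0) :
    ∀ s, z s = Complex.exp (-((lam:ℂ) * s) * Complex.I) *
      ((Real.cos (Real.sqrt (1+lam^2) * s) : ℝ) * z 0
        + ((Real.sin (Real.sqrt (1+lam^2) * s) / Real.sqrt (1+lam^2) : ℝ) : ℂ)
          * ((lam:ℂ) * Complex.I * z 0 + z' 0)) := by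
  intro t
  set μ : ℝ := Real.sqrt (1 + lam^2) with hμdef
  have hμpos : 0 < μ := Real.sqrt_pos.mpr (by positivity)
  have hμsq : μ^2 = 1 + lam^2 := Real.sq_sqrt (by positivity)
  -- the integrating factor
  set E : ℝ → ℂ := fun s => Complex.exp ((lam:ℂ) * s * Complex.I) with hEdef
  have hdE : ∀ s : ℝ, HasDerivAt E ((lam:ℂ) * Complex.I * E s) s := by
    intro s
    have hinner : HasDerivAt (fun s : ℝ => (lam:ℂ) * s * Complex.I) ((lam:ℂ) * Complex.I) s := by
      have h0 : HasDerivAt (fun s : ℝ => (s:ℂ)) 1 s := Complex.ofRealCLM.hasDerivAt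
      have := (h0.const_mul (lam:ℂ)).mul_const Complex.I
      simpa using this
    have := hinner.cexp
    convert this using 1
    ring
  set u : ℝ → ℂ := fun s => E s * z s with hu
  set u' : ℝ → ℂ := fun s => E s * ((lam:ℂ) * Complex.I * z s + z' s) with hu'
  have hdu : ∀ s, HasDerivAt u (u' s) s := by
    intro s
    have := (hdE s).mul (h1 s)
    exact this.congr_deriv (by simp only [hu']; ring)
  have hdu' : ∀ s, HasDerivAt u' ((-(1+lam^2) : ℝ) * u s) s := by
    intro s
    have hw : HasDerivAt (fun s => (lam:ℂ) * Complex.I * z s + z' s)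
        ((lam:ℂ) * Complex.I * z' s + z'' s) s := ((h1 s).const_mul _).add (h2 s)
    have H := (hdE s).mul hw
    refine H.congr_deriv ?_
    symm
    have hz'' : z'' s = -z s - 2 * (lam:ℂ) * (Complex.I * z' s) := by
      have := hode s
      linear_combination this
    rw [hz'']
    simp only [hu, hu']
    push_cast
    ring_nf
    rw [Complex.I_sq]
    ring
  -- real and imaginary parts satisfy the oscillator equation
  have hre : ∀ s, HasDerivAt (fun s => (u s).re) ((u' s).re) s :=
    fun s => (Complex.reCLM.hasFDerivAt.comp_hasDerivAt s (hdu s))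
  have him : ∀ s, HasDerivAt (fun s => (u s).im) ((u' s).im) s :=
    fun s => (Complex.imCLM.hasFDerivAt.comp_hasDerivAt s (hdu s))
  have hre' : ∀ s, HasDerivAt (fun s => (u' s).re) (-(μ^2) * (u s).re) s := by
    intro s
    have := Complex.reCLM.hasFDerivAt.comp_hasDerivAt s (hdu' s)
    refine this.congr_deriv ?_
    symm
    simp only [ContinuousLinearMap.coe_coe, Complex.reCLM_apply, Complex.re_ofReal_mul, hμsq]
  have him' : ∀ s, HasDerivAt (fun s => (u' s).im) (-(μ^2) * (u s).im) s := by
    intro s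
    have := Complex.imCLM.hasFDerivAt.comp_hasDerivAt s (hdu' s)
    refine this.congr_deriv ?_
    symm
    simp only [ContinuousLinearMap.coe_coe, Complex.imCLM_apply, Complex.im_ofReal_mul, hμsq]
  have hre_eq := osc_unique μ hμpos _ _ hre hre' t
  have him_eq := osc_unique μ hμpos _ _ him him' t
  -- combine into a complex formula for u
  have hueq : u t = (Real.cos (μ*t) : ℝ) * u 0
      + ((Real.sin (μ*t)/μ : ℝ) : ℂ) * u' 0 := by
    apply Complex.ext
    · simp only [Complex.add_re, Complex.re_ofReal_mul]
      rw [hre_eq]; ring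
    · simp only [Complex.add_im, Complex.im_ofReal_mul]
      rw [him_eq]; ring
  -- initial values
  have hE0 : E 0 = 1 := by simp [hEdef]
  have hu0 : u 0 = z 0 := by simp [hu, hE0]
  have hu'0 : u' 0 = (lam:ℂ) * Complex.I * z 0 + z' 0 := by simp [hu', hE0]
  -- unwind
  have hinv : Complex.exp (-((lam:ℂ) * t) * Complex.I) * E t = 1 := by
    have hzero : -((lam:ℂ) * t) * Complex.I + (lam:ℂ) * t * Complex.I = 0 := by ring
    rw [hEdef]
    rw [← Complex.exp_add, hzero, Complex.exp_zero]
  calc z t = (Complex.exp (-((lam:ℂ) * t) * Complex.I) * E t) * z t := by rw [hinv]; ring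
    _ = Complex.exp (-((lam:ℂ) * t) * Complex.I) * u t := by rw [hu]; ring
    _ = _ := by rw [hueq, hu0, hu'0]

noncomputable def qreCLM : Quaternion ℝ →L[ℝ] ℝ :=
  ⟨QuaternionAlgebra.reₗ _ _ _, Quaternion.continuous_re⟩
noncomputable def qimICLM : Quaternion ℝ →L[ℝ] ℝ :=
  ⟨QuaternionAlgebra.imIₗ _ _ _, Quaternion.continuous_imI⟩
noncomputable def qimJCLM : Quaternion ℝ →L[ℝ] ℝ :=
  ⟨QuaternionAlgebra.imJₗ _ _ _, Quaternion.continuous_imJ⟩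
noncomputable def qimKCLM : Quaternion ℝ →L[ℝ] ℝ :=
  ⟨QuaternionAlgebra.imKₗ _ _ _, Quaternion.continuous_imK⟩

lemma qderiv (L : Quaternion ℝ →L[ℝ] ℝ) (f f' : ℝ → Quaternion ℝ)
    (h : ∀ s, HasDerivAt f (f' s) s) (s : ℝ) :
    HasDerivAt (fun t => ((L (f t) : ℝ) : ℂ)) ((L (f' s) : ℝ) : ℂ) s :=
  Complex.ofRealCLM.hasFDerivAt.comp_hasDerivAt s (L.hasFDerivAt.comp_hasDerivAt s (h s))

lemma geo_formula (lam θ : ℝ) (γ γ' γ'' : ℝ → Quaternion ℝ)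
    (h0 : γ 0 = 1) (h0' : γ' 0 = ⟨0, 0, Real.cos θ, Real.sin θ⟩)
    (hd1 : ∀ s, HasDerivAt γ (γ' s) s) (hd2 : ∀ s, HasDerivAt γ' (γ'' s) s)
    (heq : ∀ s, γ'' s + γ s + (2 * lam) • (qi * γ' s) = 0) (s : ℝ) :
    (γ s).re = Real.cos (lam*s) * Real.cos (Real.sqrt (1+lam^2)*s)
        + (lam / Real.sqrt (1+lam^2)) * Real.sin (lam*s) * Real.sin (Real.sqrt (1+lam^2)*s) ∧
    (γ s).imI = (lam / Real.sqrt (1+lam^2)) * Real.cos (lam*s) * Real.sin (Real.sqrt (1+lam^2)*s)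
        - Real.sin (lam*s) * Real.cos (Real.sqrt (1+lam^2)*s) ∧
    (γ s).imJ = (Real.sin (Real.sqrt (1+lam^2)*s) / Real.sqrt (1+lam^2)) * Real.cos (θ - lam*s) ∧
    (γ s).imK = (Real.sin (Real.sqrt (1+lam^2)*s) / Real.sqrt (1+lam^2)) * Real.sin (θ - lam*s) := by
  set μ : ℝ := Real.sqrt (1+lam^2) with hμdef
  -- the two complex combinations
  set z : ℝ → ℂ := fun t => ((γ t).re : ℂ) + ((γ t).imI : ℂ) * Complex.I with hz
  set z' : ℝ → ℂ := fun t => ((γ' t).re : ℂ) + ((γ' t).imI : ℂ) * Complex.I with hz'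
  set z'' : ℝ → ℂ := fun t => ((γ'' t).re : ℂ) + ((γ'' t).imI : ℂ) * Complex.I with hz''
  set w : ℝ → ℂ := fun t => ((γ t).imJ : ℂ) + ((γ t).imK : ℂ) * Complex.I with hw
  set w' : ℝ → ℂ := fun t => ((γ' t).imJ : ℂ) + ((γ' t).imK : ℂ) * Complex.I with hw'
  set w'' : ℝ → ℂ := fun t => ((γ'' t).imJ : ℂ) + ((γ'' t).imK : ℂ) * Complex.I with hw''
  have hzd1 : ∀ t, HasDerivAt z (z' t) t := fun t =>
    (qderiv qreCLM γ γ' hd1 t).add ((qderiv qimICLM γ γ' hd1 t).mul_const Complex.I)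
  have hzd2 : ∀ t, HasDerivAt z' (z'' t) t := fun t =>
    (qderiv qreCLM γ' γ'' hd2 t).add ((qderiv qimICLM γ' γ'' hd2 t).mul_const Complex.I)
  have hwd1 : ∀ t, HasDerivAt w (w' t) t := fun t =>
    (qderiv qimJCLM γ γ' hd1 t).add ((qderiv qimKCLM γ γ' hd1 t).mul_const Complex.I)
  have hwd2 : ∀ t, HasDerivAt w' (w'' t) t := fun t =>
    (qderiv qimJCLM γ' γ'' hd2 t).add ((qderiv qimKCLM γ' γ'' hd2 t).mul_const Complex.I)
  -- component equations of the quaternion ODE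
  have comp : ∀ t, ((γ'' t).re + (γ t).re + (2*lam) * (-(γ' t).imI) = 0)
      ∧ ((γ'' t).imI + (γ t).imI + (2*lam) * ((γ' t).re) = 0)
      ∧ ((γ'' t).imJ + (γ t).imJ + (2*lam) * (-(γ' t).imK) = 0)
      ∧ ((γ'' t).imK + (γ t).imK + (2*lam) * ((γ' t).imJ) = 0) := by
    intro t
    have h := heq t
    rw [Quaternion.ext_iff] at h
    simp only [Quaternion.re_add, Quaternion.imI_add, Quaternion.imJ_add, Quaternion.imK_add,
      Quaternion.re_smul, Quaternion.imI_smul, Quaternion.imJ_smul, Quaternion.imK_smul,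
      Quaternion.re_mul, Quaternion.imI_mul, Quaternion.imJ_mul, Quaternion.imK_mul,
      Quaternion.re_zero, Quaternion.imI_zero, Quaternion.imJ_zero, Quaternion.imK_zero,
      smul_eq_mul] at h
    simp only [qi] at h
    obtain ⟨e1, e2, e3, e4⟩ := h
    norm_num at e1 e2 e3 e4
    refine ⟨by linarith, by linarith, by linarith, by linarith⟩
  have hodez : ∀ t, z'' t + z t + 2 * (lam:ℂ) * (Complex.I * z' t) = 0 := by
    intro t
    obtain ⟨e1, e2, -, -⟩ := comp t
    simp only [hz, hz', hz'']
    apply Complex.ext <;> simp <;> linarith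
  have hodew : ∀ t, w'' t + w t + 2 * (lam:ℂ) * (Complex.I * w' t) = 0 := by
    intro t
    obtain ⟨-, -, e3, e4⟩ := comp t
    simp only [hw, hw', hw'']
    apply Complex.ext <;> simp <;> linarith
  have hz0 : z 0 = 1 := by simp [hz, h0, Quaternion.re_one, Quaternion.imI_one]
  have hz'0 : z' 0 = 0 := by simp [hz', h0']
  have hw0 : w 0 = 0 := by simp [hw, h0, Quaternion.imJ_one, Quaternion.imK_one]
  have hw'0 : w' 0 = Complex.exp ((θ:ℂ) * Complex.I) := by
    simp [hw', h0', Complex.exp_mul_I]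
  have hzs := complex_ode lam z z' z'' hzd1 hzd2 hodez s
  have hws := complex_ode lam w w' w'' hwd1 hwd2 hodew s
  rw [hz0, hz'0] at hzs
  rw [hw0, hw'0] at hws
  rw [← hμdef] at hzs hws
  -- extract components
  have hexp : Complex.exp (-((lam:ℂ) * s) * Complex.I)
      = (Real.cos (lam*s) : ℂ) - (Real.sin (lam*s) : ℂ) * Complex.I := by
    rw [Complex.exp_mul_I, Complex.cos_neg, Complex.sin_neg, ← Complex.ofReal_mul,
      ← Complex.ofReal_cos, ← Complex.ofReal_sin]
    ring
  have hrhs_z : Complex.exp (-((lam:ℂ) * s) * Complex.I) *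
      ((Real.cos (μ*s) : ℝ) * 1 + ((Real.sin (μ*s)/μ : ℝ) : ℂ) * ((lam:ℂ) * Complex.I * 1 + 0))
      = ((Real.cos (lam*s) * Real.cos (μ*s) + (lam/μ) * Real.sin (lam*s) * Real.sin (μ*s) : ℝ) : ℂ)
        + ((((lam/μ) * Real.cos (lam*s) * Real.sin (μ*s) - Real.sin (lam*s) * Real.cos (μ*s)) : ℝ) : ℂ) * Complex.I := by
    rw [hexp]
    push_cast
    ring_nf
    rw [Complex.I_sq]
    ring
  have hrhs_w : Complex.exp (-((lam:ℂ) * s) * Complex.I) *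
      ((Real.cos (μ*s) : ℝ) * 0 + ((Real.sin (μ*s)/μ : ℝ) : ℂ) * ((lam:ℂ) * Complex.I * 0 + Complex.exp ((θ:ℂ) * Complex.I)))
      = (((Real.sin (μ*s)/μ) * Real.cos (θ - lam*s) : ℝ) : ℂ)
        + (((Real.sin (μ*s)/μ) * Real.sin (θ - lam*s) : ℝ) : ℂ) * Complex.I := by
    rw [hexp, Complex.exp_mul_I, ← Complex.ofReal_cos, ← Complex.ofReal_sin,
      Real.cos_sub, Real.sin_sub]
    push_cast
    ring_nf
    rw [Complex.I_sq]
    ring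
  rw [hrhs_z] at hzs
  rw [hrhs_w] at hws
  have hzre := congrArg Complex.re hzs
  have hzim := congrArg Complex.im hzs
  have hwre := congrArg Complex.re hws
  have hwim := congrArg Complex.im hws
  simp only [hz, hw, Complex.add_re, Complex.add_im, Complex.ofReal_re, Complex.ofReal_im,
    Complex.mul_re, Complex.mul_im, Complex.I_re, Complex.I_im, mul_zero, mul_one,
    zero_mul, sub_zero, add_zero, zero_add, zero_sub, neg_zero, neg_neg] at hzre hzim hwre hwim
  exact ⟨hzre, hzim, hwre, hwim⟩

set_option maxHeartbeats 1000000 in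
/-- The map `F(θ,s) = γ_θ(s)`, where `γ_θ` is the geodesic of curvature `λ` from
`p = (1,0,0,0)` with initial velocity `(0,0,cos θ,sin θ)`, is injective on
`θ ∈ [0,2π)`, `s ∈ (0, π/√(1+λ²))`: if `γ_{θ₁}(s₁) = γ_{θ₂}(s₂)` then `s₁ = s₂`
and `θ₁ = θ₂`. -/
theorem geodesic_map_injective (lam θ₁ θ₂ s₁ s₂ : ℝ)
    (hθ₁ : θ₁ ∈ Set.Ico (0:ℝ) (2 * π)) (hθ₂ : θ₂ ∈ Set.Ico (0:ℝ) (2 * π))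
    (hs₁ : s₁ ∈ Set.Ioo 0 (π / Real.sqrt (1 + lam ^ 2)))
    (hs₂ : s₂ ∈ Set.Ioo 0 (π / Real.sqrt (1 + lam ^ 2)))
    (γ₁ γ₁' γ₁'' γ₂ γ₂' γ₂'' : ℝ → Quaternion ℝ)
    (hγ₁0 : γ₁ 0 = 1) (hγ₁'0 : γ₁' 0 = ⟨0, 0, Real.cos θ₁, Real.sin θ₁⟩)
    (hγ₂0 : γ₂ 0 = 1) (hγ₂'0 : γ₂' 0 = ⟨0, 0, Real.cos θ₂, Real.sin θ₂⟩)
    (hd11 : ∀ s, HasDerivAt γ₁ (γ₁' s) s) (hd12 : ∀ s, HasDerivAt γ₁' (γ₁'' s) s)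
    (hd21 : ∀ s, HasDerivAt γ₂ (γ₂' s) s) (hd22 : ∀ s, HasDerivAt γ₂' (γ₂'' s) s)
    (heq1 : ∀ s, γ₁'' s + γ₁ s + (2 * lam) • (qi * γ₁' s) = 0)
    (heq2 : ∀ s, γ₂'' s + γ₂ s + (2 * lam) • (qi * γ₂' s) = 0)
    (hmeet : γ₁ s₁ = γ₂ s₂) :
    s₁ = s₂ ∧ θ₁ = θ₂ := by
  set μ : ℝ := Real.sqrt (1 + lam^2) with hμdef
  have hμpos : 0 < μ := Real.sqrt_pos.mpr (by positivity)
  have hμsq : μ^2 = 1 + lam^2 := Real.sq_sqrt (by positivity)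
  have hlamlt : |lam| < μ := by
    rw [hμdef, ← Real.sqrt_sq_eq_abs]
    exact Real.sqrt_lt_sqrt (sq_nonneg lam) (by linarith)
  obtain ⟨F1re, F1imI, F1imJ, F1imK⟩ :=
    geo_formula lam θ₁ γ₁ γ₁' γ₁'' hγ₁0 hγ₁'0 hd11 hd12 heq1 s₁
  obtain ⟨F2re, F2imI, F2imJ, F2imK⟩ :=
    geo_formula lam θ₂ γ₂ γ₂' γ₂'' hγ₂0 hγ₂'0 hd21 hd22 heq2 s₂
  rw [← hμdef] at F1re F1imI F1imJ F1imK F2re F2imI F2imJ F2imK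
  have hre : Real.cos (lam*s₁) * Real.cos (μ*s₁) + (lam/μ) * Real.sin (lam*s₁) * Real.sin (μ*s₁)
      = Real.cos (lam*s₂) * Real.cos (μ*s₂) + (lam/μ) * Real.sin (lam*s₂) * Real.sin (μ*s₂) := by
    rw [← F1re, ← F2re, hmeet]
  have himI : (lam/μ) * Real.cos (lam*s₁) * Real.sin (μ*s₁) - Real.sin (lam*s₁) * Real.cos (μ*s₁)
      = (lam/μ) * Real.cos (lam*s₂) * Real.sin (μ*s₂) - Real.sin (lam*s₂) * Real.cos (μ*s₂) := by
    rw [← F1imI, ← F2imI, hmeet]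
  have himJ : (Real.sin (μ*s₁)/μ) * Real.cos (θ₁ - lam*s₁)
      = (Real.sin (μ*s₂)/μ) * Real.cos (θ₂ - lam*s₂) := by
    rw [← F1imJ, ← F2imJ, hmeet]
  have himK : (Real.sin (μ*s₁)/μ) * Real.sin (θ₁ - lam*s₁)
      = (Real.sin (μ*s₂)/μ) * Real.sin (θ₂ - lam*s₂) := by
    rw [← F1imK, ← F2imK, hmeet]
  -- step 1 : s₁ = s₂
  have hss : s₁ = s₂ := by
    rcases eq_or_ne lam 0 with h0 | h0
    · -- lam = 0 : use the real part, cos is injective on [0, π]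
      have hμ1 : μ = 1 := by rw [hμdef, h0]; norm_num
      rw [h0, hμ1] at hre
      simp only [zero_mul, Real.cos_zero, one_mul, zero_div, mul_zero, zero_add, add_zero,
        Real.sin_zero] at hre
      have h1 : s₁ ∈ Set.Icc 0 π := by
        have := hs₁; rw [hμ1] at this
        constructor <;> [exact this.1.le; simpa using this.2.le]
      have h2 : s₂ ∈ Set.Icc 0 π := by
        have := hs₂; rw [hμ1] at this
        constructor <;> [exact this.1.le; simpa using this.2.le]
      exact Real.injOn_cos h1 h2 hre
    · -- lam ≠ 0 : the imI component is strictly monotone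
      set f : ℝ → ℝ := fun s => (lam/μ) * Real.cos (lam*s) * Real.sin (μ*s)
        - Real.sin (lam*s) * Real.cos (μ*s) with hf
      have hdf : ∀ s, HasDerivAt f (Real.sin (lam*s) * Real.sin (μ*s) / μ) s := by
        intro s
        have hls : HasDerivAt (fun s : ℝ => lam * s) lam s := by
          simpa using (hasDerivAt_id s).const_mul lam
        have hms : HasDerivAt (fun s : ℝ => μ * s) μ s := by
          simpa using (hasDerivAt_id s).const_mul μ
        have hcl : HasDerivAt (fun s => Real.cos (lam*s)) (-Real.sin (lam*s) * lam) s :=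
          (Real.hasDerivAt_cos (lam*s)).comp s hls
        have hsl : HasDerivAt (fun s => Real.sin (lam*s)) (Real.cos (lam*s) * lam) s :=
          (Real.hasDerivAt_sin (lam*s)).comp s hls
        have hcm : HasDerivAt (fun s => Real.cos (μ*s)) (-Real.sin (μ*s) * μ) s :=
          (Real.hasDerivAt_cos (μ*s)).comp s hms
        have hsm : HasDerivAt (fun s => Real.sin (μ*s)) (Real.cos (μ*s) * μ) s :=
          (Real.hasDerivAt_sin (μ*s)).comp s hms
        have H := (((hcl.const_mul (lam/μ)).mul hsm).sub (hsl.mul hcm))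
        have harith : (lam / μ * (-Real.sin (lam * s) * lam) * Real.sin (μ * s)
              + lam / μ * Real.cos (lam * s) * (Real.cos (μ * s) * μ))
            - (Real.cos (lam * s) * lam * Real.cos (μ * s)
              + Real.sin (lam * s) * (-Real.sin (μ * s) * μ))
            = Real.sin (lam*s) * Real.sin (μ*s) / μ := by
          field_simp
          linear_combination (Real.sin (lam*s) * Real.sin (μ*s)) * hμsq
        rw [harith] at H
        exact H
      have hcont : Continuous f := by
        have : Differentiable ℝ f := fun s => (hdf s).differentiableAt
        exact this.continuous
      have hIcc : Set.Icc (0:ℝ) (π/μ) ⊆ Set.Icc (0:ℝ) (π/μ) := le_refl _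
      have hderiv_eq : ∀ x ∈ Set.Ioo (0:ℝ) (π/μ),
          deriv f x = Real.sin (lam*x) * Real.sin (μ*x) / μ := fun x _ => (hdf x).deriv
      have hsinμ : ∀ x ∈ Set.Ioo (0:ℝ) (π/μ), 0 < Real.sin (μ*x) := by
        intro x hx
        apply Real.sin_pos_of_pos_of_lt_pi (mul_pos hμpos hx.1)
        rw [← lt_div_iff₀' hμpos]
        exact hx.2
      have hmem1 : s₁ ∈ Set.Icc (0:ℝ) (π/μ) := ⟨hs₁.1.le, hs₁.2.le⟩
      have hmem2 : s₂ ∈ Set.Icc (0:ℝ) (π/μ) := ⟨hs₂.1.le, hs₂.2.le⟩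
      have hfeq : f s₁ = f s₂ := himI
      rcases lt_or_gt_of_ne h0 with hneg | hpos
      · -- lam < 0 : strictly decreasing
        have hmono : StrictAntiOn f (Set.Icc 0 (π/μ)) := by
          apply strictAntiOn_of_deriv_neg (convex_Icc _ _) (hcont.continuousOn)
          intro x hx
          rw [interior_Icc] at hx
          rw [(hdf x).deriv]
          have h1 : Real.sin (lam*x) < 0 := by
            apply Real.sin_neg_of_neg_of_neg_pi_lt
            · exact mul_neg_of_neg_of_pos hneg hx.1
            · have : |lam| * x < μ * x := by
                apply mul_lt_mul_of_pos_right hlamlt hx.1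
              have h2 : μ * x < π := by rw [← lt_div_iff₀' hμpos]; exact hx.2
              rw [abs_of_neg hneg] at this
              nlinarith
          have h2 := hsinμ x hx
          have : Real.sin (lam*x) * Real.sin (μ*x) < 0 := mul_neg_of_neg_of_pos h1 h2
          exact div_neg_of_neg_of_pos this hμpos
        exact hmono.injOn hmem1 hmem2 hfeq
      · -- lam > 0 : strictly increasing
        have hmono : StrictMonoOn f (Set.Icc 0 (π/μ)) := by
          apply strictMonoOn_of_deriv_pos (convex_Icc _ _) (hcont.continuousOn)
          intro x hx
          rw [interior_Icc] at hx
          rw [(hdf x).deriv]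
          have h1 : 0 < Real.sin (lam*x) := by
            apply Real.sin_pos_of_pos_of_lt_pi (mul_pos hpos hx.1)
            have : lam * x < μ * x := by
              have := mul_lt_mul_of_pos_right hlamlt hx.1
              rw [abs_of_pos hpos] at this
              exact this
            have h2 : μ * x < π := by rw [← lt_div_iff₀' hμpos]; exact hx.2
            linarith
          have h2 := hsinμ x hx
          exact div_pos (mul_pos h1 h2) hμpos
        exact hmono.injOn hmem1 hmem2 hfeq
  -- step 2 : θ₁ = θ₂
  subst hss
  refine ⟨rfl, ?_⟩
  have hsinpos : 0 < Real.sin (μ*s₁) / μ := by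
    apply div_pos _ hμpos
    apply Real.sin_pos_of_pos_of_lt_pi (mul_pos hμpos hs₁.1)
    rw [← lt_div_iff₀' hμpos]
    exact hs₁.2
  have hc : Real.cos (θ₁ - lam*s₁) = Real.cos (θ₂ - lam*s₁) :=
    mul_left_cancel₀ hsinpos.ne' himJ
  have hs : Real.sin (θ₁ - lam*s₁) = Real.sin (θ₂ - lam*s₁) :=
    mul_left_cancel₀ hsinpos.ne' himK
  have hcos1 : Real.cos (θ₁ - θ₂) = 1 := by
    have h := Real.cos_sub (θ₁ - lam*s₁) (θ₂ - lam*s₁)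
    rw [show θ₁ - lam*s₁ - (θ₂ - lam*s₁) = θ₁ - θ₂ by ring] at h
    rw [h, hc, hs]
    nlinarith [Real.sin_sq_add_cos_sq (θ₂ - lam*s₁)]
  have := (Real.cos_eq_one_iff_of_lt_of_lt
    (by linarith [hθ₁.1, hθ₁.2, hθ₂.1, hθ₂.2])
    (by linarith [hθ₁.1, hθ₁.2, hθ₂.1, hθ₂.2])).mp hcos1
  linarith
end

section
/- For a solution (ω(s), τ(s), σ(s)) of the rotationally-invariant constant mean curvature system ω'=cos σ, τ'=sin σ/cos ω, σ' = tan ω sin σ − cot³ω sin³σ + 2H(sin²ω cos²σ + sin²σ)^{3/2}/sin²ω, with H constant, the quantity E = sin ω cos ω sin σ/√(sin²ω cos²σ + sin²σ) − H sin²ω is constant along the solution. -/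
open Real

private lemma energy_hasDerivAt_zero (H : ℝ) (ω σ : ℝ → ℝ)
    (hrange : ∀ s, ω s ∈ Set.Ioo 0 (π / 2))
    (hω : ∀ s, HasDerivAt ω (Real.cos (σ s)) s)
    (hσ : ∀ s, HasDerivAt σ
      (Real.tan (ω s) * Real.sin (σ s)
        - Real.cot (ω s) ^ 3 * Real.sin (σ s) ^ 3
        + 2 * H * (Real.sin (ω s) ^ 2 * Real.cos (σ s) ^ 2
            + Real.sin (σ s) ^ 2) ^ ((3 : ℝ) / 2) / Real.sin (ω s) ^ 2) s)
    (s : ℝ) :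
    HasDerivAt (fun t => Real.sin (ω t) * Real.cos (ω t) * Real.sin (σ t) /
          Real.sqrt (Real.sin (ω t) ^ 2 * Real.cos (σ t) ^ 2 + Real.sin (σ t) ^ 2)
        - H * Real.sin (ω t) ^ 2) 0 s := by
  obtain ⟨h0, h1⟩ := hrange s
  have ha : 0 < Real.sin (ω s) := Real.sin_pos_of_pos_of_lt_pi h0 (lt_trans h1 (by linarith [pi_pos]))
  have hb : 0 < Real.cos (ω s) := Real.cos_pos_of_mem_Ioo ⟨by linarith [pi_pos], h1⟩
  have ha1 : Real.sin (ω s) ≤ 1 := Real.sin_le_one _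
  have hQpos : 0 < Real.sin (ω s) ^ 2 * Real.cos (σ s) ^ 2 + Real.sin (σ s) ^ 2 := by
    nlinarith [sin_sq_add_cos_sq (σ s), sq_nonneg (Real.sin (σ s)), sq_nonneg (Real.sin (ω s) * Real.cos (σ s))]
  have hrpos : 0 < Real.sqrt (Real.sin (ω s) ^ 2 * Real.cos (σ s) ^ 2 + Real.sin (σ s) ^ 2) :=
    Real.sqrt_pos.mpr hQpos
  have hnum : HasDerivAt (fun t => Real.sin (ω t) * Real.cos (ω t) * Real.sin (σ t)) _ s :=
    (((hω s).sin).mul ((hω s).cos)).mul ((hσ s).sin)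
  have hQ : HasDerivAt (fun t => Real.sin (ω t) ^ 2 * Real.cos (σ t) ^ 2 + Real.sin (σ t) ^ 2) _ s :=
    ((((hω s).sin).pow 2).mul (((hσ s).cos).pow 2)).add (((hσ s).sin).pow 2)
  have hsqrt := hQ.sqrt (ne_of_gt hQpos)
  have hdiv := hnum.div hsqrt (ne_of_gt hrpos)
  have hfull := hdiv.sub ((((hω s).sin).pow 2).const_mul H)
  refine hfull.congr_deriv ?_
  symm
  simp only [Pi.mul_apply, Pi.pow_apply]
  rw [Real.tan_eq_sin_div_cos, Real.cot_eq_cos_div_sin]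
  have hQ32 : (Real.sin (ω s) ^ 2 * Real.cos (σ s) ^ 2 + Real.sin (σ s) ^ 2) ^ ((3:ℝ)/2)
      = Real.sqrt (Real.sin (ω s) ^ 2 * Real.cos (σ s) ^ 2 + Real.sin (σ s) ^ 2) ^ 3 := by
    rw [show ((3:ℝ)/2) = 1 + 1/2 by norm_num, Real.rpow_add hQpos, Real.rpow_one,
      ← Real.sqrt_eq_rpow]
    linear_combination (-Real.sqrt (Real.sin (ω s) ^ 2 * Real.cos (σ s) ^ 2 + Real.sin (σ s) ^ 2)) *
      Real.sq_sqrt hQpos.le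
  rw [hQ32]
  have hr2 : Real.sqrt (Real.sin (ω s) ^ 2 * Real.cos (σ s) ^ 2 + Real.sin (σ s) ^ 2) ^ 2
      = Real.sin (ω s) ^ 2 * Real.cos (σ s) ^ 2 + Real.sin (σ s) ^ 2 := Real.sq_sqrt hQpos.le
  have hab : Real.sin (ω s) ^ 2 + Real.cos (ω s) ^ 2 = 1 := sin_sq_add_cos_sq _
  have hcd : Real.sin (σ s) ^ 2 + Real.cos (σ s) ^ 2 = 1 := sin_sq_add_cos_sq _
  set a := Real.sin (ω s) with ha'
  set b := Real.cos (ω s) with hb'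
  set c := Real.sin (σ s) with hc'
  set d := Real.cos (σ s) with hd'
  set r := Real.sqrt (a ^ 2 * d ^ 2 + c ^ 2) with hrr
  field_simp
  linear_combination (norm := ring)
      (2*c^3*d*r^2 - 2*c^5*d + 2*b^2*c^3*d*r^2 - 2*b^2*c^5*d - 2*a^2*c*d*r^2 - 2*a^2*c^3*d*r^2 + 4*a^2*c^5*d + 2*a^2*b^2*c^5*d + 2*a^4*c*d^3 - 2*a^4*c^5*d - 2*a^8*c^3*d*r^2 + 2*a^8*c^5*d - 2*a^8*b^2*c^3*d*r^2 + 2*a^8*b^2*c^5*d - 2*a^8*b^4*c^3*d*r^2 + 2*a^8*b^4*c^5*d + 4*a^9*b*d*r^5*H - 4*a^9*b*c^2*d*r^3*H + 2*a^10*c*d*r^2 + 4*a^10*c^3*d*r^2 - 6*a^10*c^5*d + 2*a^10*b^2*c*d*r^2 + 2*a^10*b^2*c^3*d*r^2 - 4*a^10*b^2*c^5*d + 2*a^10*b^4*c^3*d - 2*a^10*b^4*c^5*d - 4*a^11*b*d*r^3*H + 4*a^11*b*c^2*d*r^3*H - 2*a^12*c*d*r^2 - 2*a^12*c*d^3 -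 2*a^12*c^3*d - 2*a^12*c^3*d*r^2 + 6*a^12*c^5*d - 2*a^12*b^2*c*d^3 - 2*a^12*b^2*c^3*d + 2*a^12*b^2*c^5*d + 2*a^14*c*d^3 + 2*a^14*c^3*d - 2*a^14*c^5*d) * hab
    + (2*c*d*r^2 - 2*c^3*d - 4*a^2*c*d*r^2 - 2*a^2*c*d^3 + 6*a^2*c^3*d - 4*a^3*b*d*r^3*H + 2*a^4*c*d*r^2 + 4*a^4*c*d^3 - 6*a^4*c^3*d - 2*a^6*c*d^3 + 2*a^6*c^3*d - 2*a^8*c*d*r^2 + 2*a^8*c^3*d + 6*a^10*c*d*r^2 + 2*a^10*c*d^3 - 8*a^10*c^3*d + 2*a^10*b^6*c^3*d + 4*a^11*b*d*r^3*H - 4*a^11*b^3*c^2*d*r*H - 6*a^12*c*d*r^2 - 6*a^12*c*d^3 + 12*a^12*c^3*d - 4*a^13*b*d*r^3*H - 4*a^13*b^3*d^3*r*H + 2*a^14*c*d*r^2 + 6*a^14*c*d^3 - 8*a^14*c^3*d - 2*a^16*c*d^3 + 2*a^16*c^3*d) * hcd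
    + (2*c*d - 2*c*d^3 - 4*a*b*d*r^3*H - 6*a^2*c*d + 4*a^2*c*d^3 + 4*a^4*c*d - 2*a^4*c*d^3 - 2*a^8*c*d + 2*a^8*c*d^3 + 2*a^8*b^6*c^3*d + 4*a^9*b*d*r^3*H - 4*a^9*b^3*d*r^3*H + 8*a^10*c*d - 6*a^10*c*d^3 - 2*a^10*b^4*c*d - 4*a^11*b*d*r^3*H + 4*a^11*b^3*d*r*H - 4*a^11*b^3*d^3*r*H - 4*a^11*b^3*c^2*d*r*H - 10*a^12*c*d + 6*a^12*c*d^3 + 4*a^14*c*d - 2*a^14*c*d^3) * hr2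

/-- First integral (energy) of the ODE system `(*)_H` for generating curves of
rotationally invariant constant mean curvature surfaces in the sub-Riemannian
`S³`: along any solution of `ω' = cos σ`, `τ' = sin σ/cos ω`,
`σ' = tan ω sin σ − cot³ω sin³σ + 2H(sin²ω cos²σ + sin²σ)^{3/2}/sin²ω`,
with `H` constant, the quantity
`E = sin ω cos ω sin σ/√(sin²ω cos²σ + sin²σ) − H sin²ω` is constant. -/
theorem energy_first_integral (H : ℝ) (ω τ σ : ℝ → ℝ)
    (hrange : ∀ s, ω s ∈ Set.Ioo 0 (π / 2))
    (hω : ∀ s, HasDerivAt ω (Real.cos (σ s)) s)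
    (hτ : ∀ s, HasDerivAt τ (Real.sin (σ s) / Real.cos (ω s)) s)
    (hσ : ∀ s, HasDerivAt σ
      (Real.tan (ω s) * Real.sin (σ s)
        - Real.cot (ω s) ^ 3 * Real.sin (σ s) ^ 3
        + 2 * H * (Real.sin (ω s) ^ 2 * Real.cos (σ s) ^ 2
            + Real.sin (σ s) ^ 2) ^ ((3 : ℝ) / 2) / Real.sin (ω s) ^ 2) s) :
    ∀ s₁ s₂ : ℝ,
      Real.sin (ω s₁) * Real.cos (ω s₁) * Real.sin (σ s₁) /
          Real.sqrt (Real.sin (ω s₁) ^ 2 * Real.cos (σ s₁) ^ 2 + Real.sin (σ s₁) ^ 2)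
        - H * Real.sin (ω s₁) ^ 2 =
      Real.sin (ω s₂) * Real.cos (ω s₂) * Real.sin (σ s₂) /
          Real.sqrt (Real.sin (ω s₂) ^ 2 * Real.cos (σ s₂) ^ 2 + Real.sin (σ s₂) ^ 2)
        - H * Real.sin (ω s₂) ^ 2 :=
  fun s₁ s₂ => by
    have hE := energy_hasDerivAt_zero H ω σ hrange hω hσ
    exact is_const_of_deriv_eq_zero (fun s => (hE s).differentiableAt)
      (fun s => (hE s).deriv) s₁ s₂
end
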